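/- Fix λ < 1 with λ ≠ 0 and q = 1 − λ. Let p(·;ϑ) = exp_q(ϑ·F(·))·e^{−φ_λ(ϑ)}, ϑ ∈ Ω, be a λ-exponential family satisfying the support condition, with common support 𝒳₀ = {x : p(x;ϑ) > 0}. For ϑ ∈ Ω set θ = ϑ·e^{−λ φ_λ(ϑ)} and φ̃_q(θ) = (1/(−λ))·(e^{−λ φ_λ(ϑ)} − 1). Then for all x ∈ 𝒳₀, p(x;ϑ) = exp_q(θ·F(x) − φ̃_q(θ)), and ∫_{𝒳₀} exp_q(θ·F(x) − φ̃_q(θ)) dν(x) = 1; that is, each member of the λ-exponential family is a member of the q-exponential family with subtractive normalization. Moreover, if F₁,…,F_d are linearly independent with respect to ν on 𝒳₀ (no nontrivial ν-a.e. affine relation among 1, F₁,…,F_d on 𝒳₀), then the map ϑ ↦ θ = ϑ·e^{−λ φ_λ(ϑ)} is injective on Ω. -/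

import Mathlib

open MeasureTheory Real
open scoped RealInnerProductSpace ENNReal BigOperators

noncomputable section

/-- The `q`-deformed exponential `exp_q(t) = [1 + λ t]₊^{1/λ}` (with `q = 1 − λ`), valued in
`[0,∞]`, with the convention `0^{1/λ} = +∞` when `λ < 0`. -/
def qexp (lam t : ℝ) : ℝ≥0∞ :=
  if 0 < 1 + lam * t then ENNReal.ofReal ((1 + lam * t) ^ (1 / lam))
  else if 0 < lam then 0 else ⊤


lemma qexp_measurable (lam : ℝ) : Measurable (qexp lam) := by
  unfold qexp
  refine Measurable.ite ?_ ?_ measurable_const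
  · exact measurableSet_lt measurable_const (by fun_prop)
  · exact ENNReal.measurable_ofReal.comp
      ((by fun_prop : Measurable fun t : ℝ => 1 + lam * t).pow measurable_const)

lemma one_add_pos_of_qexp {lam t : ℝ} (h0 : qexp lam t ≠ 0) (ht : qexp lam t ≠ ⊤) :
    0 < 1 + lam * t := by
  by_contra h
  unfold qexp at h0 ht
  rw [if_neg h] at h0 ht
  by_cases hl : 0 < lam
  · rw [if_pos hl] at h0; exact h0 rfl
  · rw [if_neg hl] at ht; exact ht rfl

lemma qexp_scale {lam : ℝ} (hlam0 : lam ≠ 0) (t a : ℝ) (ha : 0 < a) :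
    qexp lam (a * t + (a - 1) / lam) = qexp lam t * ENNReal.ofReal (a ^ (1 / lam)) := by
  have h1 : 1 + lam * (a * t + (a - 1) / lam) = a * (1 + lam * t) := by
    field_simp; ring
  have hpos : (0 : ℝ) < a ^ (1 / lam) := Real.rpow_pos_of_pos ha _
  unfold qexp
  rw [h1]
  by_cases hb : 0 < 1 + lam * t
  · rw [if_pos (mul_pos ha hb), if_pos hb,
      Real.mul_rpow ha.le hb.le, ← ENNReal.ofReal_mul (by positivity), mul_comm]
  · have hb' : ¬ 0 < a * (1 + lam * t) :=
      not_lt.mpr (mul_nonpos_of_nonneg_of_nonpos ha.le (not_lt.mp hb))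
    rw [if_neg hb', if_neg hb]
    by_cases hl : 0 < lam
    · rw [if_pos hl, zero_mul]
    · rw [if_neg hl]
      exact (ENNReal.top_mul (ENNReal.ofReal_pos.mpr hpos).ne').symm

lemma qexp_mono {lam : ℝ} (hlam0 : lam ≠ 0) {t' t : ℝ} (h : t' ≤ t) :
    qexp lam t' ≤ qexp lam t := by
  unfold qexp
  rcases hlam0.lt_or_gt with hl | hl
  · have hb : 1 + lam * t ≤ 1 + lam * t' := by nlinarith
    by_cases h2 : 0 < 1 + lam * t
    · rw [if_pos h2, if_pos (lt_of_lt_of_le h2 hb)]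
      exact ENNReal.ofReal_le_ofReal
        (Real.rpow_le_rpow_of_nonpos h2 hb (one_div_nonpos.mpr hl.le))
    · rw [if_neg h2, if_neg (not_lt.mpr hl.le)]; exact le_top
  · have hb : 1 + lam * t' ≤ 1 + lam * t := by nlinarith
    by_cases h2 : 0 < 1 + lam * t'
    · rw [if_pos h2, if_pos (lt_of_lt_of_le h2 hb)]
      exact ENNReal.ofReal_le_ofReal
        (Real.rpow_le_rpow h2.le hb (by positivity))
    · rw [if_neg h2, if_pos hl]; exact zero_le

lemma qexp_strict {lam : ℝ} (hlam0 : lam ≠ 0) {t' t : ℝ} (h : t' < t)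
    (hpos : 0 < 1 + lam * t) : qexp lam t' < qexp lam t := by
  unfold qexp
  rw [if_pos hpos]
  have hv : 0 < (1 + lam * t) ^ (1 / lam) := Real.rpow_pos_of_pos hpos _
  rcases hlam0.lt_or_gt with hl | hl
  · have hb : 1 + lam * t < 1 + lam * t' := by nlinarith
    rw [if_pos (hpos.trans hb)]
    exact (ENNReal.ofReal_lt_ofReal_iff hv).mpr
      (Real.rpow_lt_rpow_of_neg hpos hb (one_div_neg.mpr hl))
  · have hb : 1 + lam * t' < 1 + lam * t := by nlinarith
    by_cases h2 : 0 < 1 + lam * t'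
    · rw [if_pos h2]
      exact (ENNReal.ofReal_lt_ofReal_iff hv).mpr
        (Real.rpow_lt_rpow h2.le hb (by positivity))
    · rw [if_neg h2, if_pos hl]
      exact ENNReal.ofReal_pos.mpr hv

/-- A λ-exponential family (divisive normalization) satisfying the support
condition can be rewritten as a q-exponential family (subtractive normalization): with
`θ = ϑ·e^{−λφ_λ(ϑ)}` and `φ̃_q(θ) = (1/(−λ))(e^{−λφ_λ(ϑ)} − 1)` one has
`p(x;ϑ) = exp_q(θ·F(x) − φ̃_q(θ))` on the common support `𝒳₀`, with
`∫_{𝒳₀} exp_q(θ·F − φ̃_q(θ)) dν = 1`; and if `F₁,…,F_d` are linearly independent w.r.t. `ν` on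
`𝒳₀` then `ϑ ↦ θ` is injective on `Ω`. -/
theorem lambdaExp_as_qExp {d : ℕ} {X : Type*} [MeasurableSpace X] (ν : Measure X)
    (lam : ℝ) (hlam0 : lam ≠ 0) (hlam1 : lam < 1)
    (F : X → EuclideanSpace ℝ (Fin d)) (hF : Measurable F)
    (Z : EuclideanSpace ℝ (Fin d) → ℝ≥0∞)
    (hZ : ∀ ϑ, Z ϑ = ∫⁻ x, qexp lam ⟪ϑ, F x⟫ ∂ν)
    (Ω : Set (EuclideanSpace ℝ (Fin d))) (hΩ : Ω = {ϑ | Z ϑ < ⊤})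
    (hZpos : ∀ ϑ ∈ Ω, 0 < Z ϑ)
    (φ : EuclideanSpace ℝ (Fin d) → ℝ)
    (hφ : ∀ ϑ ∈ Ω, φ ϑ = Real.log (Z ϑ).toReal)
    (p : EuclideanSpace ℝ (Fin d) → X → ℝ≥0∞)
    (hp : ∀ ϑ x, p ϑ x = qexp lam ⟪ϑ, F x⟫ * ENNReal.ofReal (Real.exp (-φ ϑ)))
    (X₀ : Set X) (hX₀ : MeasurableSet X₀)
    (hsupp : ∀ ϑ ∈ Ω, {x | 0 < p ϑ x} =ᵐ[ν] X₀) :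
    (∀ ϑ ∈ Ω, ∀ x ∈ X₀,
      p ϑ x = qexp lam (⟪Real.exp (-lam * φ ϑ) • ϑ, F x⟫
        - (1 / (-lam)) * (Real.exp (-lam * φ ϑ) - 1))) ∧
    (∀ ϑ ∈ Ω, ∫⁻ x in X₀, qexp lam (⟪Real.exp (-lam * φ ϑ) • ϑ, F x⟫
        - (1 / (-lam)) * (Real.exp (-lam * φ ϑ) - 1)) ∂ν = 1) ∧
    ((∀ (c : EuclideanSpace ℝ (Fin d)) (b : ℝ),
        (∀ᵐ x ∂ν.restrict X₀, ⟪c, F x⟫ + b = 0) → c = 0 ∧ b = 0) →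
      Set.InjOn (fun ϑ => Real.exp (-lam * φ ϑ) • ϑ) Ω) := by
  have hZfin : ∀ ϑ ∈ Ω, Z ϑ ≠ ⊤ := fun ϑ hϑ => by rw [hΩ] at hϑ; exact hϑ.ne
  -- key pointwise identity (holds everywhere)
  have key : ∀ ϑ ∈ Ω, ∀ x, p ϑ x = qexp lam (⟪Real.exp (-lam * φ ϑ) • ϑ, F x⟫
        - (1 / (-lam)) * (Real.exp (-lam * φ ϑ) - 1)) := by
    intro ϑ hϑ x
    have ha : (0:ℝ) < Real.exp (-lam * φ ϑ) := Real.exp_pos _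
    have harg : ⟪Real.exp (-lam * φ ϑ) • ϑ, F x⟫
          - (1 / (-lam)) * (Real.exp (-lam * φ ϑ) - 1)
        = Real.exp (-lam * φ ϑ) * ⟪ϑ, F x⟫ + (Real.exp (-lam * φ ϑ) - 1) / lam := by
      rw [real_inner_smul_left, sub_eq_add_neg]
      congr 1
      rw [div_neg, one_div, neg_mul, neg_neg, inv_mul_eq_div]
    have hrp : Real.exp (-lam * φ ϑ) ^ (1 / lam) = Real.exp (-φ ϑ) := by
      have h' : (-lam * φ ϑ) * (1 / lam) = -φ ϑ := by field_simp
      rw [Real.rpow_def_of_pos ha, Real.log_exp, h']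
    rw [harg, qexp_scale hlam0 _ _ ha, hrp, hp]
  -- measurability
  have hm : ∀ ϑ : EuclideanSpace ℝ (Fin d), Measurable fun x => qexp lam ⟪ϑ, F x⟫ :=
    fun ϑ => (qexp_measurable lam).comp (measurable_const.inner hF)
  -- normalization of p over X₀
  have hnorm : ∀ ϑ ∈ Ω, ∫⁻ x in X₀, p ϑ x ∂ν = 1 := by
    intro ϑ hϑ
    have h1 : ∫⁻ x, p ϑ x ∂ν = Z ϑ * ENNReal.ofReal (Real.exp (-φ ϑ)) := by
      simp_rw [hp ϑ]
      rw [lintegral_mul_const _ (hm ϑ), hZ]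
    have hind : ∀ x, {x | 0 < p ϑ x}.indicator (p ϑ) x = p ϑ x := by
      intro x
      by_cases hx : 0 < p ϑ x
      · exact Set.indicator_of_mem (show x ∈ {x | 0 < p ϑ x} from hx) (p ϑ)
      · rw [Set.indicator_of_notMem (show x ∉ {x | 0 < p ϑ x} from hx)]
        exact (le_zero_iff.mp (not_lt.mp hx)).symm
    have h2 : ∫⁻ x in X₀, p ϑ x ∂ν = ∫⁻ x, p ϑ x ∂ν := by
      rw [← lintegral_indicator hX₀]
      refine lintegral_congr_ae ?_
      exact ((indicator_ae_eq_of_ae_eq_set (hsupp ϑ hϑ)).symm).trans (Filter.Eventually.of_forall hind)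
    have hZt : 0 < (Z ϑ).toReal := ENNReal.toReal_pos (hZpos ϑ hϑ).ne' (hZfin ϑ hϑ)
    rw [h2, h1, hφ ϑ hϑ, Real.exp_neg, Real.exp_log hZt,
      ENNReal.ofReal_inv_of_pos hZt, ENNReal.ofReal_toReal (hZfin ϑ hϑ),
      ENNReal.mul_inv_cancel (hZpos ϑ hϑ).ne' (hZfin ϑ hϑ)]
  have hqnorm : ∀ ϑ ∈ Ω, ∫⁻ x in X₀, qexp lam (⟪Real.exp (-lam * φ ϑ) • ϑ, F x⟫
        - (1 / (-lam)) * (Real.exp (-lam * φ ϑ) - 1)) ∂ν = 1 := by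
    intro ϑ hϑ
    rw [← hnorm ϑ hϑ]
    exact lintegral_congr fun x => (key ϑ hϑ x).symm
  refine ⟨fun ϑ hϑ x _ => key ϑ hϑ x, hqnorm, ?_⟩
  intro _hLI ϑ₁ hϑ₁ ϑ₂ hϑ₂ hθ
  simp only at hθ
  have hclaim : ∀ u ∈ Ω, ∀ v ∈ Ω,
      Real.exp (-lam * φ u) • u = Real.exp (-lam * φ v) • v →
      ¬ ((1 / (-lam)) * (Real.exp (-lam * φ u) - 1)
          < (1 / (-lam)) * (Real.exp (-lam * φ v) - 1)) := by
    intro u hu v hv huv hlt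
    set c₁ := (1 / (-lam)) * (Real.exp (-lam * φ u) - 1) with hc₁
    set c₂ := (1 / (-lam)) * (Real.exp (-lam * φ v) - 1) with hc₂
    set θ := Real.exp (-lam * φ u) • u with hθdef
    set f₁ : X → ℝ≥0∞ := fun x => qexp lam (⟪θ, F x⟫ - c₁) with hf₁
    set f₂ : X → ℝ≥0∞ := fun x => qexp lam (⟪θ, F x⟫ - c₂) with hf₂
    have h1 : ∫⁻ x in X₀, f₁ x ∂ν = 1 := hqnorm u hu
    have h2 : ∫⁻ x in X₀, f₂ x ∂ν = 1 := by
      have := hqnorm v hv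
      rw [← huv] at this
      exact this
    have hle : ∀ x, f₂ x ≤ f₁ x := fun x => qexp_mono hlam0 (by linarith)
    have hmeas1 : Measurable f₁ :=
      (qexp_measurable lam).comp ((measurable_const.inner hF).sub measurable_const)
    have heq : f₂ =ᵐ[ν.restrict X₀] f₁ :=
      ae_eq_of_ae_le_of_lintegral_le (Filter.Eventually.of_forall hle)
        (by rw [h2]; exact ENNReal.one_ne_top) hmeas1.aemeasurable (by rw [h1, h2])
    have hfin : ∀ᵐ x ∂ν.restrict X₀, f₁ x < ⊤ :=
      ae_lt_top hmeas1 (by rw [h1]; exact ENNReal.one_ne_top)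
    have hpos : ∀ᵐ x ∂ν.restrict X₀, 0 < f₁ x := by
      have hset : ∀ᵐ x ∂ν, x ∈ {x | 0 < p u x} ↔ x ∈ X₀ :=
        Filter.eventuallyEq_set.mp (hsupp u hu)
      filter_upwards [ae_restrict_of_ae hset, ae_restrict_mem hX₀] with x hx hxX
      have h0 := hx.mpr hxX
      rwa [key u hu x] at h0
    have hbad : ∀ᵐ x ∂ν.restrict X₀, False := by
      filter_upwards [heq, hfin, hpos] with x hx hfx hpx
      have hb : 0 < 1 + lam * (⟪θ, F x⟫ - c₁) := one_add_pos_of_qexp hpx.ne' hfx.ne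
      have hlt2 : f₂ x < f₁ x := qexp_strict hlam0 (by linarith) hb
      rw [hx] at hlt2
      exact lt_irrefl _ hlt2
    have hzero : ν.restrict X₀ = 0 :=
      ae_eq_bot.mp (Filter.eventually_false_iff_eq_bot.mp hbad)
    rw [hzero, lintegral_zero_measure] at h1
    exact zero_ne_one h1
  have h12 := hclaim ϑ₁ hϑ₁ ϑ₂ hϑ₂ hθ
  have h21 := hclaim ϑ₂ hϑ₂ ϑ₁ hϑ₁ hθ.symm
  have hc : (1 / (-lam)) * (Real.exp (-lam * φ ϑ₁) - 1)
      = (1 / (-lam)) * (Real.exp (-lam * φ ϑ₂) - 1) :=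
    le_antisymm (not_lt.mp h21) (not_lt.mp h12)
  have hne : (1 : ℝ) / (-lam) ≠ 0 := one_div_ne_zero (neg_ne_zero.mpr hlam0)
  have haa : Real.exp (-lam * φ ϑ₁) = Real.exp (-lam * φ ϑ₂) := by
    have := mul_left_cancel₀ hne hc
    linarith
  rw [← haa] at hθ
  exact smul_right_injective _ (Real.exp_pos (-lam * φ ϑ₁)).ne' hθ
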